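/- Let G = (V, E) be a finite strongly connected directed graph, j* = (u*, v*) ∈ E, and u' ∈ V. There exists a vertex w ∈ V and a j*-divided tree pair (T_{u'}, T_w) with u* ∈ T_{u'} if and only if there exists a directed path in G from u* to u' that does not contain v*. -/

import Mathlib

open Relation


/-- `T` is a subgraph of the directed graph with edge set `E` that is a tree with
vertex set `S`, rooted at `r` (possibly the single vertex `r`). -/
def IsRootedTreeOn {V : Type*} (E T : Set (V × V)) (S : Set V) (r : V) : Prop :=
  r ∈ S ∧ T ⊆ E ∧ (∀ e ∈ T, e.1 ∈ S ∧ e.2 ∈ S) ∧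
  (∀ u ∈ S, u ≠ r → ∃! e, e ∈ T ∧ e.1 = u) ∧
  (∀ e ∈ T, e.1 ≠ r) ∧
  (∀ u ∈ S, Relation.ReflTransGen (fun a b => (a, b) ∈ T) u r)

/-- `(T1, T2)`, with vertex sets `S1, S2` and roots `r1, r2`, is a `j`-divided
tree pair: two vertex-disjoint rooted trees whose vertex sets partition `V`,
such that the edge `j` joins the two trees (equivalently, their union together
with `j` is weakly connected). -/
def IsJDividedTreePair {V : Type*} (E T1 : Set (V × V)) (S1 : Set V) (r1 : V)
    (T2 : Set (V × V)) (S2 : Set V) (r2 : V) (j : V × V) : Prop :=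
  IsRootedTreeOn E T1 S1 r1 ∧ IsRootedTreeOn E T2 S2 r2 ∧
  Disjoint S1 S2 ∧ S1 ∪ S2 = Set.univ ∧
  ((j.1 ∈ S1 ∧ j.2 ∈ S2) ∨ (j.1 ∈ S2 ∧ j.2 ∈ S1))

/-- Reachability in exactly `n` steps. -/
def ReachIn {V : Type*} (R : V → V → Prop) (r : V) : ℕ → V → Prop
  | 0, u => u = r
  | (n+1), u => ∃ v, R u v ∧ ReachIn R r n v

lemma reachIn_of_rtg {V : Type*} {R : V → V → Prop} {r u : V}
    (h : Relation.ReflTransGen R u r) : ∃ n, ReachIn R r n u := by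
  induction h using Relation.ReflTransGen.head_induction_on with
  | refl => exact ⟨0, rfl⟩
  | head hab _ ih => exact ⟨ih.choose + 1, _, hab, ih.choose_spec⟩

/-- Existence of a spanning in-tree on `S` rooted at `r`, given every vertex of `S`
can reach `r` within `S`. -/
lemma exists_rooted_tree {V : Type*} (E : Set (V × V)) (S : Set V) (r : V)
    (hr : r ∈ S)
    (hreach : ∀ u ∈ S,
      Relation.ReflTransGen (fun a b => (a, b) ∈ E ∧ a ∈ S ∧ b ∈ S) u r) :
    ∃ T, IsRootedTreeOn E T S r := by
  classical
  set R : V → V → Prop := fun a b => (a, b) ∈ E ∧ a ∈ S ∧ b ∈ S with hR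
  have hex : ∀ u ∈ S, ∃ n, ReachIn R r n u := fun u hu => reachIn_of_rtg (hreach u hu)
  set d : V → ℕ := fun u => if h : ∃ n, ReachIn R r n u then Nat.find h else 0 with hd
  have key : ∀ u, u ∈ S → u ≠ r → ∃ v, R u v ∧ v ∈ S ∧ d v < d u := by
    intro u hu hne
    have h := hex u hu
    have hd0 : d u = Nat.find h := by simp [hd, h]
    have hfind : ReachIn R r (Nat.find h) u := Nat.find_spec h
    rcases hn : Nat.find h with _ | m
    · rw [hn] at hfind; exact absurd hfind hne
    · rw [hn] at hfind
      obtain ⟨v, hRv, hrv⟩ := hfind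
      refine ⟨v, hRv, hRv.2.2, ?_⟩
      have hv : ∃ n, ReachIn R r n v := ⟨m, hrv⟩
      have : d v ≤ m := by
        rw [hd]; simp only [hv, dif_pos]
        exact Nat.find_le hrv
      omega
  have key' : ∀ u, ∃ v, u ∈ S → u ≠ r → R u v ∧ v ∈ S ∧ d v < d u := by
    intro u
    by_cases h : u ∈ S ∧ u ≠ r
    · obtain ⟨v, hv⟩ := key u h.1 h.2
      exact ⟨v, fun _ _ => hv⟩
    · exact ⟨r, fun h1 h2 => absurd ⟨h1, h2⟩ h⟩
  choose g hg using key'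
  refine ⟨{e | e.1 ∈ S ∧ e.1 ≠ r ∧ e.2 = g e.1}, hr, ?_, ?_, ?_, ?_, ?_⟩
  · rintro ⟨a, b⟩ ⟨h1, h2, h3⟩
    simp only at h1 h2 h3
    subst h3; exact (hg a h1 h2).1.1
  · rintro ⟨a, b⟩ ⟨h1, h2, h3⟩
    simp only at h1 h2 h3
    subst h3; exact ⟨h1, (hg a h1 h2).2.1⟩
  · intro u hu hne
    refine ⟨(u, g u), ⟨⟨hu, hne, rfl⟩, rfl⟩, ?_⟩
    rintro ⟨a, b⟩ ⟨⟨h1, h2, h3⟩, h4⟩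
    simp only at h1 h2 h3 h4
    subst h4; subst h3; rfl
  · rintro ⟨a, b⟩ ⟨h1, h2, h3⟩
    exact h2
  · intro u hu
    have main : ∀ n u, u ∈ S → d u = n → Relation.ReflTransGen
        (fun a b => (a, b) ∈ {e : V × V | e.1 ∈ S ∧ e.1 ≠ r ∧ e.2 = g e.1}) u r := by
      intro n
      induction n using Nat.strong_induction_on with
      | _ n ih =>
        intro u hu hdu
        by_cases hne : u = r
        · subst hne; exact .refl
        · have hlt := (hg u hu hne).2
          refine Relation.ReflTransGen.head (b := g u) ⟨hu, hne, rfl⟩ ?_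
          exact ih (d (g u)) (hdu ▸ hlt.2) _ hlt.1 rfl
    exact main (d u) u hu rfl

/-- From ReflTransGen, obtain a path list. -/
lemma rtg_to_list {V : Type*} {R : V → V → Prop} {a b : V}
    (h : Relation.ReflTransGen R a b) :
    ∃ l : List V, l.Chain' R ∧ l.head? = some a ∧ l.getLast? = some b ∧
      ∀ x ∈ l, x = a ∨ ∃ y, R y x := by
  induction h with
  | refl => exact ⟨[a], List.isChain_singleton _, by simp, by simp, by simp⟩
  | @tail b c hbc hcd ih =>
    obtain ⟨l, hc, hh, hl, hm⟩ := ih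
    refine ⟨l ++ [c], ?_, ?_, ?_, ?_⟩
    · refine List.IsChain.append hc (List.isChain_singleton _) ?_
      intro x hx y hy
      simp at hy
      rw [hl] at hx
      simp at hx
      subst hx; subst hy; exact hcd
    · cases l with
      | nil => simp at hh
      | cons z l => simpa using hh
    · simp
    · intro x hx
      rcases List.mem_append.1 hx with h' | h'
      · exact hm x h'
      · simp at h'
        subst h'
        exact Or.inr ⟨_, hcd⟩

lemma list_to_rtg {V : Type*} {R : V → V → Prop} :
    ∀ (l : List V) (a b : V), l.Chain' R → l.head? = some a → l.getLast? = some b →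
      Relation.ReflTransGen R a b := by
  intro l
  induction l with
  | nil => intro a b _ h; simp at h
  | cons x l ih =>
    intro a b hc hh hl
    simp at hh
    subst hh
    cases l with
    | nil => simp at hl; subst hl; exact .refl
    | cons y l' =>
      have hc' := hc
      simp only [List.Chain'] at hc'
      rw [List.isChain_cons_cons] at hc'
      refine Relation.ReflTransGen.head hc'.1 (ih y b hc'.2 rfl ?_)
      simpa using hl
/-- In a strongly connected graph with `j* = (u*, v*) ∈ E`: there is a
`j*`-divided tree pair `(T_{u'}, T_w)` with `u* ∈ T_{u'}` iff there is a directed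
path from `u*` to `u'` not containing `v*` (length-zero paths allowed). -/
theorem stmt12 {V : Type*} [Fintype V] (E : Set (V × V))
    (hself : ∀ v : V, (v, v) ∉ E)
    (hconn : ∀ u v : V, Relation.ReflTransGen (fun a b => (a, b) ∈ E) u v)
    (ustar vstar u' : V) (hj : (ustar, vstar) ∈ E) :
    (∃ (w : V) (T1 T2 : Set (V × V)) (S1 S2 : Set V),
        IsJDividedTreePair E T1 S1 u' T2 S2 w (ustar, vstar) ∧ ustar ∈ S1) ↔
    (∃ l : List V, l.Chain' (fun a b => (a, b) ∈ E) ∧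
        l.head? = some ustar ∧ l.getLast? = some u' ∧ vstar ∉ l) := by
  constructor
  · rintro ⟨w, T1, T2, S1, S2, ⟨ht1, ht2, hdisj, huniv, hcross⟩, hu⟩
    -- vstar ∈ S2
    have hvS2 : vstar ∈ S2 := by
      rcases hcross with ⟨_, h⟩ | ⟨h, _⟩
      · exact h
      · exact absurd (Set.disjoint_left.1 hdisj hu) (fun hn => hn h)
    have hvS1 : vstar ∉ S1 := fun h => Set.disjoint_left.1 hdisj h hvS2
    obtain ⟨l, hc, hh, hl, hm⟩ := rtg_to_list (ht1.2.2.2.2.2 ustar hu)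
    refine ⟨l, ?_, hh, hl, ?_⟩
    · exact hc.imp (fun a b h => ht1.2.1 h)
    · intro hmem
      rcases hm vstar hmem with h | ⟨y, hy⟩
      · exact hvS1 (h ▸ hu)
      · exact hvS1 ((ht1.2.2.1 _ hy).2)
  · rintro ⟨l, hc, hh, hl, hv⟩
    classical
    have hu'v : u' ≠ vstar := by
      intro h
      obtain ⟨hne, h2⟩ := List.mem_getLast?_eq_getLast (by rw [hl, h]; simp : vstar ∈ l.getLast?)
      exact hv (h2 ▸ List.getLast_mem hne)
    -- path relation avoiding vstar
    set R1 : V → V → Prop := fun a b => (a, b) ∈ E ∧ a ≠ vstar ∧ b ≠ vstar with hR1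
    have hrtg1 : Relation.ReflTransGen R1 ustar u' := by
      have : l.Chain' R1 := by
        simp only [List.Chain'] at hc ⊢
        rw [List.isChain_iff_getElem] at hc ⊢
        intro i hi
        refine ⟨hc i hi, ?_, ?_⟩
        · intro h; exact hv (h ▸ (List.getElem_mem _))
        · intro h; exact hv (h ▸ (List.getElem_mem _))
      exact list_to_rtg l ustar u' this hh hl
    set S1 : Set V := {v | Relation.ReflTransGen R1 v u'} with hS1
    have hvnS1 : vstar ∉ S1 := by
      intro h
      rcases (Relation.ReflTransGen.cases_head h) with h' | ⟨c, hstep, _⟩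
      · exact hu'v h'.symm
      · exact hstep.2.1 rfl
    have hmemS1 : ∀ v ∈ S1, v ≠ vstar := fun v hv h => hvnS1 (h ▸ hv)
    have hu'S1 : u' ∈ S1 := Relation.ReflTransGen.refl
    have huS1 : ustar ∈ S1 := hrtg1
    -- in-S1 reachability
    have hreach1 : ∀ u ∈ S1,
        Relation.ReflTransGen (fun a b => (a, b) ∈ E ∧ a ∈ S1 ∧ b ∈ S1) u u' := by
      intro u hu
      have : ∀ v, Relation.ReflTransGen R1 v u' →
          Relation.ReflTransGen (fun a b => (a, b) ∈ E ∧ a ∈ S1 ∧ b ∈ S1) v u' := by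
        intro v h
        induction h using Relation.ReflTransGen.head_induction_on with
        | refl => exact .refl
        | @head a c hac hcr ih =>
          exact Relation.ReflTransGen.head
            ⟨hac.1, Relation.ReflTransGen.head hac hcr, hcr⟩ ih
      exact this u hu
    -- S2 = complement
    set S2 : Set V := S1ᶜ with hS2
    have hvS2 : vstar ∈ S2 := hvnS1
    have hreach2 : ∀ u ∈ S2,
        Relation.ReflTransGen (fun a b => (a, b) ∈ E ∧ a ∈ S2 ∧ b ∈ S2) u vstar := by
      intro u hu
      have : ∀ v, Relation.ReflTransGen (fun a b => (a, b) ∈ E) v vstar →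
          v ∈ S2 → Relation.ReflTransGen (fun a b => (a, b) ∈ E ∧ a ∈ S2 ∧ b ∈ S2) v vstar := by
        intro v h
        induction h using Relation.ReflTransGen.head_induction_on with
        | refl => intro _; exact .refl
        | @head a c hac hcr ih =>
          intro haS2
          by_cases hav : a = vstar
          · subst hav; exact .refl
          · have hcS2 : c ∈ S2 := by
              intro hcS1
              exact haS2 (Relation.ReflTransGen.head ⟨hac, hav, hmemS1 c hcS1⟩ hcS1)
            exact Relation.ReflTransGen.head ⟨hac, haS2, hcS2⟩ (ih hcS2)
      exact this u (hconn u vstar) hu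
    obtain ⟨T1, hT1⟩ := exists_rooted_tree E S1 u' hu'S1 hreach1
    obtain ⟨T2, hT2⟩ := exists_rooted_tree E S2 vstar hvS2 hreach2
    exact ⟨vstar, T1, T2, S1, S2,
      ⟨hT1, hT2, disjoint_compl_right, Set.union_compl_self S1,
        Or.inl ⟨huS1, hvS2⟩⟩, huS1⟩
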